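/- Let u : ℝ → ℝ be a C³ 2π-periodic mean-zero solution of βk²u''' + (λk² − λ⁻¹)u'' − αu' − λ sin(z+u) + (λ/2π)∫₀^{2π}sin(s+u(s))ds = 0 with α, β, k, λ > 0. Then ∫₀^{2π}sin(s+u(s))ds ≥ 0, with equality only if u ≡ 0. -/

import Mathlib

open Real MeasureTheory intervalIntegral Set

/-- Positivity of the mean of `sin(s+u(s))` for solutions of the rescaled
equation: `∫₀^{2π} sin(s+u(s)) ds ≥ 0`, with equality only if `u ≡ 0`. -/
theorem mean_sin_nonneg
    (α β k lam : ℝ) (hα : 0 < α) (hβ : 0 < β) (hk : 0 < k) (hlam : 0 < lam)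
    (u : ℝ → ℝ) (hu : ContDiff ℝ 3 u)
    (hper : ∀ z, u (z + 2*π) = u z)
    (hmean : ∫ s in (0:ℝ)..(2*π), u s = 0)
    (hODE : ∀ z, β * k^2 * iteratedDeriv 3 u z
        + (lam * k^2 - lam⁻¹) * iteratedDeriv 2 u z
        - α * deriv u z - lam * Real.sin (z + u z)
        + (lam / (2*π)) * ∫ s in (0:ℝ)..(2*π), Real.sin (s + u s) = 0) :
    0 ≤ ∫ s in (0:ℝ)..(2*π), Real.sin (s + u s)
    ∧ ((∫ s in (0:ℝ)..(2*π), Real.sin (s + u s)) = 0 → ∀ z, u z = 0) := by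
  have hπ : (0:ℝ) < 2*π := by positivity
  set M : ℝ := ∫ s in (0:ℝ)..(2*π), Real.sin (s + u s) with hMdef
  set u1 : ℝ → ℝ := deriv u with hu1def
  set u2 : ℝ → ℝ := deriv u1 with hu2def
  set u3 : ℝ → ℝ := deriv u2 with hu3def
  -- smoothness facts
  have hu3eq : ContDiff ℝ (2+1) u := by norm_num; exact hu
  have hud : Differentiable ℝ u := hu3eq.differentiable (by norm_num)
  have hu1c : ContDiff ℝ 2 u1 := (contDiff_succ_iff_deriv.mp hu3eq).2.2
  have hu1c' : ContDiff ℝ (1+1) u1 := by norm_num; exact hu1c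
  have hu1d : Differentiable ℝ u1 := hu1c.differentiable (by norm_num)
  have hu2c : ContDiff ℝ 1 u2 := (contDiff_succ_iff_deriv.mp hu1c').2.2
  have hu2d : Differentiable ℝ u2 := hu2c.differentiable (by norm_num)
  have hc1 : Continuous u1 := hu1c.continuous
  have hc2 : Continuous u2 := hu2c.continuous
  have hc3 : Continuous u3 := (contDiff_one_iff_deriv.mp hu2c).2
  have hiter2 : iteratedDeriv 2 u = u2 := by
    rw [show (2:ℕ) = 1+1 from rfl, iteratedDeriv_succ, iteratedDeriv_one]
  have hiter3 : iteratedDeriv 3 u = u3 := by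
    rw [show (3:ℕ) = 2+1 from rfl, iteratedDeriv_succ, hiter2]
  -- periodicity
  have hp : Function.Periodic u (2*π) := hper
  have hpderiv : ∀ f : ℝ → ℝ, Function.Periodic f (2*π) →
      Function.Periodic (deriv f) (2*π) := by
    intro f hf z
    have hfe : (fun x => f (x + 2*π)) = f := funext hf
    rw [← deriv_comp_add_const, hfe]
  have hp1 : Function.Periodic u1 (2*π) := hpderiv u hp
  have hp2 : Function.Periodic u2 (2*π) := hpderiv u1 hp1
  have huT : u (2*π) = u 0 := by simpa using hper 0
  have hu1T : u1 (2*π) = u1 0 := by simpa using hp1 0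
  have hu2T : u2 (2*π) = u2 0 := by simpa using hp2 0
  -- HasDerivAt facts
  have hD : ∀ z, HasDerivAt u (u1 z) z := fun z => (hud z).hasDerivAt
  have hD1 : ∀ z, HasDerivAt u1 (u2 z) z := fun z => (hu1d z).hasDerivAt
  have hD2 : ∀ z, HasDerivAt u2 (u3 z) z := fun z => (hu2d z).hasDerivAt
  -- basic integrabilities
  have i1 : IntervalIntegrable (fun z => u1 z * u3 z) volume 0 (2*π) :=
    (hc1.mul hc3).intervalIntegrable _ _
  have i2 : IntervalIntegrable (fun z => u1 z * u2 z) volume 0 (2*π) :=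
    (hc1.mul hc2).intervalIntegrable _ _
  have i3 : IntervalIntegrable (fun z => u1 z * u1 z) volume 0 (2*π) :=
    (hc1.mul hc1).intervalIntegrable _ _
  have i22 : IntervalIntegrable (fun z => u2 z * u2 z) volume 0 (2*π) :=
    (hc2.mul hc2).intervalIntegrable _ _
  have csin : Continuous (fun z => Real.sin (z + u z)) :=
    Real.continuous_sin.comp (continuous_id.add hu.continuous)
  have i4 : IntervalIntegrable (fun z => Real.sin (z + u z) * u1 z) volume 0 (2*π) :=
    (csin.mul hc1).intervalIntegrable _ _
  have isin : IntervalIntegrable (fun z => Real.sin (z + u z)) volume 0 (2*π) :=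
    csin.intervalIntegrable _ _
  have i5 : IntervalIntegrable u1 volume 0 (2*π) := hc1.intervalIntegrable _ _
  -- ∫ u1 = 0
  have hL : ∫ z in (0:ℝ)..(2*π), u1 z = 0 := by
    rw [integral_eq_sub_of_hasDerivAt (fun x _ => hD x) i5, huT, sub_self]
  -- ∫ u1 u2 = 0
  have hK : ∫ z in (0:ℝ)..(2*π), u1 z * u2 z = 0 := by
    have h : ∀ x ∈ uIcc (0:ℝ) (2*π),
        HasDerivAt (fun z => u1 z * u1 z / 2) (u1 x * u2 x) x := by
      intro x _
      refine (((hD1 x).mul (hD1 x)).div_const 2).congr_deriv ?_; ring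
    rw [integral_eq_sub_of_hasDerivAt h i2, hu1T, sub_self]
  -- ∫ (u2² + u1 u3) = 0
  have hJ : (∫ z in (0:ℝ)..(2*π), (u2 z * u2 z + u1 z * u3 z)) = 0 := by
    have h : ∀ x ∈ uIcc (0:ℝ) (2*π),
        HasDerivAt (fun z => u1 z * u2 z) (u2 x * u2 x + u1 x * u3 x) x :=
      fun x _ => (hD1 x).mul (hD2 x)
    rw [integral_eq_sub_of_hasDerivAt h (i22.add i1), hu1T, hu2T, sub_self]
  have hJ' : (∫ z in (0:ℝ)..(2*π), u1 z * u3 z)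
      = - ∫ z in (0:ℝ)..(2*π), u2 z * u2 z := by
    rw [integral_add i22 i1] at hJ; linarith
  -- ∫ sin(z+u) (1+u1) = 0
  have hDint : ∫ z in (0:ℝ)..(2*π), (Real.sin (z + u z) + Real.sin (z + u z) * u1 z) = 0 := by
    have h : ∀ x ∈ uIcc (0:ℝ) (2*π),
        HasDerivAt (fun z => -Real.cos (z + u z))
          (Real.sin (x + u x) + Real.sin (x + u x) * u1 x) x := by
      intro x _
      have h1 : HasDerivAt (fun z => z + u z) (1 + u1 x) x := (hasDerivAt_id x).add (hD x)
      refine h1.cos.neg.congr_deriv ?_; ring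
    rw [integral_eq_sub_of_hasDerivAt h (isin.add i4), huT]
    have hc : Real.cos (2*π + u 0) = Real.cos (0 + u 0) := by
      rw [add_comm (2*π), Real.cos_add_two_pi, zero_add]
    rw [hc]; ring
  have hDeq : (∫ z in (0:ℝ)..(2*π), Real.sin (z + u z) * u1 z) = -M := by
    rw [integral_add isin i4] at hDint
    rw [← hMdef] at hDint
    linarith
  -- multiply the ODE by u1 and integrate
  have hzero : ∀ z, (β * k^2) * (u1 z * u3 z) + (lam * k^2 - lam⁻¹) * (u1 z * u2 z)
      - α * (u1 z * u1 z) - lam * (Real.sin (z + u z) * u1 z)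
      + ((lam / (2*π)) * M) * u1 z = 0 := by
    intro z
    have h := hODE z
    rw [hiter3, hiter2] at h
    have h2 : (β * k^2 * u3 z + (lam * k^2 - lam⁻¹) * u2 z - α * u1 z
        - lam * Real.sin (z + u z) + lam / (2*π) * M) * u1 z = 0 := by rw [h]; ring
    linarith [h2, (by ring : (β * k^2 * u3 z + (lam * k^2 - lam⁻¹) * u2 z - α * u1 z
        - lam * Real.sin (z + u z) + lam / (2*π) * M) * u1 z
      = (β * k^2) * (u1 z * u3 z) + (lam * k^2 - lam⁻¹) * (u1 z * u2 z)
      - α * (u1 z * u1 z) - lam * (Real.sin (z + u z) * u1 z)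
      + ((lam / (2*π)) * M) * u1 z)]
  have hint0 : (∫ z in (0:ℝ)..(2*π),
      ((β * k^2) * (u1 z * u3 z) + (lam * k^2 - lam⁻¹) * (u1 z * u2 z)
      - α * (u1 z * u1 z) - lam * (Real.sin (z + u z) * u1 z)
      + ((lam / (2*π)) * M) * u1 z)) = 0 := by
    simp only [hzero, intervalIntegral.integral_zero]
  rw [integral_add ((((i1.const_mul _).add (i2.const_mul _)).sub (i3.const_mul _)).sub
        (i4.const_mul _)) (i5.const_mul _),
      integral_sub (((i1.const_mul _).add (i2.const_mul _)).sub (i3.const_mul _))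
        (i4.const_mul _),
      integral_sub ((i1.const_mul _).add (i2.const_mul _)) (i3.const_mul _),
      integral_add (i1.const_mul _) (i2.const_mul _),
      intervalIntegral.integral_const_mul, intervalIntegral.integral_const_mul, intervalIntegral.integral_const_mul, intervalIntegral.integral_const_mul,
      intervalIntegral.integral_const_mul, hJ', hK, hDeq, hL] at hint0
  set I1 : ℝ := ∫ z in (0:ℝ)..(2*π), u1 z * u1 z with hI1def
  set I2 : ℝ := ∫ z in (0:ℝ)..(2*π), u2 z * u2 z with hI2def
  -- energy identity: lam * M = β k² I2 + α I1
  have hkey : lam * M = β * k^2 * I2 + α * I1 := by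
    have := hint0; nlinarith [this]
  have hI1nn : 0 ≤ I1 :=
    intervalIntegral.integral_nonneg hπ.le (fun x _ => mul_self_nonneg _)
  have hI2nn : 0 ≤ I2 :=
    intervalIntegral.integral_nonneg hπ.le (fun x _ => mul_self_nonneg _)
  have hbk : 0 ≤ β * k^2 * I2 := mul_nonneg (by positivity) hI2nn
  have haI : 0 ≤ α * I1 := mul_nonneg hα.le hI1nn
  have hlmnn : 0 ≤ lam * M := by rw [hkey]; exact add_nonneg hbk haI
  have hMnn : 0 ≤ M := by nlinarith [hlmnn]
  refine ⟨hMnn, ?_⟩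
  intro hM0 z
  have hkey0 := hkey
  rw [hM0, mul_zero] at hkey0
  have hαI0 : α * I1 = 0 := by linarith
  have hI1zero : I1 = 0 := (mul_eq_zero.mp hαI0).resolve_left hα.ne'
  -- u1 ≡ 0
  have hae : (fun z => u1 z * u1 z) =ᵐ[volume.restrict (Ioc (0:ℝ) (2*π))] 0 :=
    (intervalIntegral.integral_eq_zero_iff_of_le_of_nonneg_ae hπ.le
      (Filter.Eventually.of_forall fun x => mul_self_nonneg (u1 x)) i3).mp hI1zero
  have heq : EqOn (fun z => u1 z * u1 z) 0 (Ioc (0:ℝ) (2*π)) :=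
    Measure.eqOn_Ioc_of_ae_eq volume hae (hc1.mul hc1).continuousOn continuousOn_const
  have h10 : ∀ x ∈ Icc (0:ℝ) (2*π), u1 x = 0 := by
    intro x hx
    rcases eq_or_lt_of_le hx.1 with h | h
    · have hT0 : u1 (2*π) = 0 :=
        mul_self_eq_zero.mp (heq (show (2*π) ∈ Ioc (0:ℝ) (2*π) from ⟨hπ, le_rfl⟩))
      rw [← h, ← hu1T]; exact hT0
    · exact mul_self_eq_zero.mp (heq ⟨h, hx.2⟩)
  have h1all : ∀ x, u1 x = 0 := by
    intro x
    have hn := Int.sub_floor_div_mul_nonneg x hπ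
    have hl := Int.sub_floor_div_mul_lt x hπ
    have hper1 := hp1.sub_int_mul_eq (x := x) (n := ⌊x / (2*π)⌋)
    rw [← hper1]
    exact h10 _ ⟨hn, hl.le⟩
  have hconst : ∀ x, u x = u 0 := fun x => is_const_of_deriv_eq_zero hud h1all x 0
  have hm : (2*π) • u 0 = 0 := by
    have : (∫ s in (0:ℝ)..(2*π), u s) = ∫ _ in (0:ℝ)..(2*π), u 0 := by
      apply intervalIntegral.integral_congr
      intro s _
      exact hconst s
    rw [this, intervalIntegral.integral_const, sub_zero] at hmean
    exact hmean
  have hu0 : u 0 = 0 := by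
    have h2 : (2*π) * u 0 = 0 := by simpa [smul_eq_mul] using hm
    exact (mul_eq_zero.mp h2).resolve_left (ne_of_gt hπ)
  rw [hconst z, hu0]
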